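/- Let γ be a real number, let λ > 0 be real, and fix a natural number y. Then the limit as k → ∞ (k a natural number) of (C(y+k-1, y))^γ · (λ · k^{-γ})^y equals λ^y / (y!)^γ, where powers of positive reals by γ are real powers. -/

import Mathlib

open Filter

lemma ascFactorial_cast_eq_prod (k y : ℕ) :
    ((k.ascFactorial y : ℝ)) = ∏ i ∈ Finset.range y, ((k : ℝ) + i) := by
  induction y with
  | zero => simp
  | succ n ih =>
    rw [Nat.ascFactorial_succ, Finset.prod_range_succ, ← ih]
    push_cast
    ring

lemma asc_div_pow_tendsto (y : ℕ) :
    Tendsto (fun k : ℕ => (k.ascFactorial y : ℝ) / (k : ℝ) ^ y) atTop (nhds 1) := by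
  have h : ∀ᶠ k : ℕ in atTop,
      (k.ascFactorial y : ℝ) / (k : ℝ) ^ y = ∏ i ∈ Finset.range y, (1 + (i : ℝ) / k) := by
    filter_upwards [eventually_ge_atTop 1] with k hk
    have hk0 : (k : ℝ) ≠ 0 := by positivity
    have heq : ∀ i ∈ Finset.range y, (1 + (i : ℝ) / k) = ((k : ℝ) + i) / k := by
      intro i _; field_simp
    rw [ascFactorial_cast_eq_prod, Finset.prod_congr rfl heq, Finset.prod_div_distrib,
      Finset.prod_const, Finset.card_range]
  rw [tendsto_congr' h]
  have : Tendsto (fun k : ℕ => ∏ i ∈ Finset.range y, (1 + (i : ℝ) / k)) atTop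
      (nhds (∏ i ∈ Finset.range y, (1 : ℝ))) := by
    apply tendsto_finset_prod
    intro i _
    have := (tendsto_natCast_atTop_atTop (R := ℝ)).inv_tendsto_atTop.const_mul (i : ℝ)
    have h2 : Tendsto (fun k : ℕ => (i : ℝ) / k) atTop (nhds 0) := by
      simpa [div_eq_mul_inv] using this
    simpa using (tendsto_const_nhds (x := (1:ℝ))).add h2
  simpa using this

/-- Let `γ` be real, `λ > 0` real, and fix a natural number `y`. Then
`(C(y+k-1, y))^γ · (λ · k^{-γ})^y → λ^y / (y!)^γ` as the natural number `k → ∞`;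
i.e., each unnormalized NGNB weight with `q = λ k^{-γ}` converges to the
corresponding unnormalized COM-Poisson weight. -/
theorem ngnb_weight_tendsto_comPoisson_weight (γ : ℝ) (lam : ℝ) (hlam : 0 < lam) (y : ℕ) :
    Tendsto
      (fun k : ℕ => ((y + k - 1).choose y : ℝ) ^ γ * (lam * (k : ℝ) ^ (-γ)) ^ y)
      atTop (nhds (lam ^ y / (Nat.factorial y : ℝ) ^ γ)) := by
  have key : Tendsto (fun k : ℕ =>
      lam ^ y / (Nat.factorial y : ℝ) ^ γ * ((k.ascFactorial y : ℝ) / (k : ℝ) ^ y) ^ γ)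
      atTop (nhds (lam ^ y / (Nat.factorial y : ℝ) ^ γ)) := by
    have h1 := (asc_div_pow_tendsto y).rpow_const (p := γ) (Or.inl one_ne_zero)
    simpa using (h1.const_mul (lam ^ y / (Nat.factorial y : ℝ) ^ γ))
  apply key.congr'
  filter_upwards [eventually_ge_atTop 1] with k hk
  have hk0 : (0 : ℝ) < (k : ℝ) := by positivity
  have hasc : (0 : ℝ) < (k.ascFactorial y : ℝ) := by
    rw [ascFactorial_cast_eq_prod]
    positivity
  have hchoose : ((y + k - 1).choose y : ℝ) = (k.ascFactorial y : ℝ) / (Nat.factorial y : ℝ) := by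
    have := Nat.ascFactorial_eq_factorial_mul_choose' k y
    have h2 : k + y - 1 = y + k - 1 := by omega
    rw [h2] at this
    field_simp
    exact_mod_cast (this.trans (Nat.mul_comm _ _)).symm
  have hchoosepos : (0 : ℝ) < ((y + k - 1).choose y : ℝ) := by
    rw [hchoose]; positivity
  rw [hchoose, Real.div_rpow hasc.le (show (0:ℝ) ≤ (Nat.factorial y : ℝ) by positivity),
    Real.div_rpow hasc.le (show (0:ℝ) ≤ (k:ℝ) ^ y by positivity), mul_pow,
    ← Real.rpow_natCast ((k:ℝ) ^ (-γ)) y, ← Real.rpow_natCast (k:ℝ) y,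
    ← Real.rpow_mul hk0.le, ← Real.rpow_mul hk0.le,
    show -γ * (y:ℝ) = -((y:ℝ) * γ) by ring, Real.rpow_neg hk0.le]
  have hpos : (0:ℝ) < (k:ℝ) ^ ((y:ℝ) * γ) := Real.rpow_pos_of_pos hk0 _
  field_simp
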